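/- Let G be a directed graph with nonnegative rational arc weights, let s1 ≠ s2 be vertices and α1, α2 ∈ ℚ≥0. Let δ+(s2) denote the set of out-neighbors of s2, let G′ be the graph obtained from G by deleting all arcs leaving s2, and for v ∈ δ+(s2) let G − s2 be the graph obtained by deleting s2 and all arcs incident to it. Then the set P_{α1,α2}(s1,s2,G) of all pairs of compatible paths for s1 and s2 with bounds α1, α2 in G equals the union of: (a) P_{α1,α2}(s1,s2,G′), and (b) for each v ∈ δ+(s2) with w(s2,v) ≤ α2, the set of pairs obtained from the pairs (p1,p2) in P_{α1, α2−w(s2,v)}(s1,v,G−s2) by prepending the arc (s2,v) to p2. -/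

import Mathlib

/-- `l` is a simple path (no repeated vertices) from `x` to `y` in the directed
graph with vertex set `S` and arc relation `A`, given as its list of vertices. -/
def IsPathOn {V : Type*} (S : Set V) (A : V → V → Prop) (x y : V) (l : List V) : Prop :=
  (∀ v ∈ l, v ∈ S) ∧ l.Chain' A ∧ l.Nodup ∧ l.head? = some x ∧ l.getLast? = some y

/-- The length of a path (given by its vertex list) w.r.t. arc weights `w`:
the sum of the weights of its arcs. -/
def pathLen {V : Type*} (w : V → V → ℚ) (l : List V) : ℚ :=
  ((l.zip l.tail).map fun p => w p.1 p.2).sum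

/-- `P_{β1,β2}(x,y,(S,A))`: the set of pairs of compatible paths for sources
`x` and `y` with bounds `β1, β2` in the graph with vertex set `S` and arcs `A`:
pairs of paths `p1 : x ⇝ t`, `p2 : y ⇝ t` ending at a common vertex `t`,
sharing no vertex other than `t`, with `|p1| ≤ β1` and `|p2| ≤ β2`. -/
def CompatPairs {V : Type*} (S : Set V) (A : V → V → Prop) (w : V → V → ℚ)
    (x y : V) (β1 β2 : ℚ) : Set (List V × List V) :=
  {q | ∃ t : V, IsPathOn S A x t q.1 ∧ IsPathOn S A y t q.2 ∧
       (∀ v, v ∈ q.1 → v ∈ q.2 → v = t) ∧ pathLen w q.1 ≤ β1 ∧ pathLen w q.2 ≤ β2}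

lemma mem_of_getLast?' {α : Type*} : ∀ {l : List α} {a : α}, l.getLast? = some a → a ∈ l
  | [], _, h => by simp at h
  | [b], a, h => by simp_all
  | b :: c :: l, a, h => by
      rw [List.getLast?_cons_cons] at h
      exact List.mem_cons_of_mem _ (mem_of_getLast?' h)

lemma pathLen_cons_cons {V : Type*} (w : V → V → ℚ) (a b : V) (l : List V) :
    pathLen w (a :: b :: l) = w a b + pathLen w (b :: l) := by
  simp [pathLen]

lemma pathLen_nonneg {V : Type*} (A : V → V → Prop) (w : V → V → ℚ)
    (hw : ∀ u v, A u v → 0 ≤ w u v) :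
    ∀ l : List V, l.Chain' A → 0 ≤ pathLen w l
  | [], _ => le_refl _
  | [a], _ => le_refl _
  | a :: b :: l, h => by
      simp only [List.Chain', List.isChain_cons_cons] at h
      rw [pathLen_cons_cons]
      exact add_nonneg (hw _ _ h.1) (pathLen_nonneg A w hw (b :: l) h.2)

lemma chain'_strengthen {V : Type*} {A : V → V → Prop} {t : V} :
    ∀ {l : List V}, l.Nodup → l.getLast? = some t → l.Chain' A →
      l.Chain' (fun u v => A u v ∧ u ≠ t)
  | [], _, _, _ => List.isChain_nil
  | [a], _, _, _ => List.isChain_singleton a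
  | a :: b :: l, hnd, hlast, hch => by
      rw [List.getLast?_cons_cons] at hlast
      simp only [List.Chain', List.isChain_cons_cons] at hch ⊢
      rw [List.nodup_cons] at hnd
      refine ⟨⟨hch.1, fun hat => hnd.1 (hat ▸ mem_of_getLast?' hlast)⟩,
        chain'_strengthen hnd.2 hlast hch.2⟩

/-- `P_{α1,α2}(s1,s2,G)` is the union of `P_{α1,α2}(s1,s2,G')` (where `G'` is
`G` minus all arcs leaving `s2`) and, for each out-neighbor `v` of `s2` with
`w(s2,v) ≤ α2`, the image of `P_{α1,α2 - w(s2,v)}(s1,v,G - s2)` under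
prepending the arc `(s2,v)` to the second path. -/
theorem stmt2 {V : Type*} (A : V → V → Prop) (w : V → V → ℚ)
    (hw : ∀ u v, A u v → 0 ≤ w u v)
    (s1 s2 : V) (hs : s1 ≠ s2) (α1 α2 : ℚ) (hα1 : 0 ≤ α1) (hα2 : 0 ≤ α2) :
    CompatPairs Set.univ A w s1 s2 α1 α2 =
      CompatPairs Set.univ (fun u v => A u v ∧ u ≠ s2) w s1 s2 α1 α2 ∪
        ⋃ v ∈ {v : V | A s2 v ∧ w s2 v ≤ α2},
          (fun q : List V × List V => (q.1, s2 :: q.2)) ''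
            CompatPairs {x : V | x ≠ s2} A w s1 v α1 (α2 - w s2 v) := by
  ext ⟨p1, p2⟩
  constructor
  · rintro ⟨t, hp1, hp2, hdisj, hl1, hl2⟩
    obtain ⟨_, hch2, hnd2, hhd2, hlast2⟩ := hp2
    rcases p2 with _ | ⟨a, rest⟩
    · simp at hhd2
    have ha : a = s2 := by simpa using hhd2
    subst ha
    rcases rest with _ | ⟨v, rest'⟩
    · -- p2 = [a], t = a
      left
      have ht : t = a := by simpa using hlast2.symm
      obtain ⟨hS1, hch1, hnd1, hhd1, hlast1⟩ := hp1
      refine ⟨t, ⟨hS1, ht ▸ chain'_strengthen hnd1 hlast1 hch1, hnd1, hhd1, hlast1⟩,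
        ⟨fun _ _ => trivial, List.isChain_singleton _, hnd2, hhd2, hlast2⟩, hdisj, hl1, hl2⟩
    · right
      simp only [List.Chain', List.isChain_cons_cons] at hch2
      rw [List.getLast?_cons_cons] at hlast2
      rw [List.nodup_cons] at hnd2
      have hts2 : t ≠ a := fun h => hnd2.1 (h ▸ mem_of_getLast?' hlast2)
      have hlen : pathLen w (a :: v :: rest') = w a v + pathLen w (v :: rest') :=
        pathLen_cons_cons w a v rest'
      have hnn : 0 ≤ pathLen w (v :: rest') := pathLen_nonneg A w hw _ hch2.2
      have hwle : w a v ≤ α2 := by rw [hlen] at hl2; linarith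
      refine Set.mem_biUnion (show v ∈ {v : V | A a v ∧ w a v ≤ α2} from ⟨hch2.1, hwle⟩) ?_
      refine ⟨(p1, v :: rest'), ⟨t, ?_, ?_, ?_, hl1, ?_⟩, rfl⟩
      · obtain ⟨hS1, hch1, hnd1, hhd1, hlast1⟩ := hp1
        refine ⟨fun x hx hxa => ?_, hch1, hnd1, hhd1, hlast1⟩
        subst hxa; exact hts2 (hdisj x hx List.mem_cons_self).symm
      · exact ⟨fun x hx hxa => hnd2.1 (hxa ▸ hx), hch2.2, hnd2.2, rfl, hlast2⟩
      · exact fun x hx1 hx2 => hdisj x hx1 (List.mem_cons_of_mem _ hx2)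
      · rw [hlen] at hl2; linarith
  · rintro (⟨t, hp1, hp2, hdisj, hl1, hl2⟩ | h)
    · exact ⟨t, ⟨hp1.1, hp1.2.1.imp (fun _ _ h => h.1), hp1.2.2⟩,
        ⟨hp2.1, hp2.2.1.imp (fun _ _ h => h.1), hp2.2.2⟩, hdisj, hl1, hl2⟩
    · simp only [Set.mem_iUnion, Set.mem_image, Set.mem_setOf_eq] at h
      obtain ⟨v, ⟨hAv, hwv⟩, ⟨q1, q2⟩, ⟨t, hq1, hq2, hdisj, hl1, hl2⟩, heq⟩ := h
      obtain ⟨rfl, rfl⟩ : p1 = q1 ∧ p2 = s2 :: q2 :=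
        ⟨congrArg Prod.fst heq.symm, congrArg Prod.snd heq.symm⟩
      obtain ⟨hS2, hch2, hnd2, hhd2, hlast2⟩ := hq2
      rcases q2 with _ | ⟨b, q2'⟩
      · simp at hhd2
      have hb : b = v := by simpa using hhd2
      subst hb
      refine ⟨t, ⟨fun _ _ => trivial, hq1.2.1, hq1.2.2⟩, ?_, ?_, hl1, ?_⟩
      · refine ⟨fun _ _ => trivial, List.isChain_cons_cons.mpr ⟨hAv, hch2⟩, ?_, rfl, ?_⟩
        · exact List.nodup_cons.mpr ⟨fun hmem => (hS2 s2 hmem) rfl, hnd2⟩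
        · rw [List.getLast?_cons_cons]; exact hlast2
      · intro x hx1 hx2
        rcases List.mem_cons.mp hx2 with rfl | hx2'
        · exact absurd rfl (hq1.1 x hx1)
        · exact hdisj x hx1 hx2'
      · rw [pathLen_cons_cons]; simp only at hl2; linarith
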